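/- Let A ∈ ℂ^{m×n} and let B ∈ ℂ^{m×m} be Hermitian, and set M = [B A; A* 0], an (m+n)×(m+n) Hermitian block matrix. The following are equivalent: (i) there exists X ∈ ℂ^{n×m} such that AX + (AX)* ≻ B; (ii) E_A B E_A ⪯ 0 and ℛ(E_A B E_A) = ℛ(E_A); (iii) i₋(M) = m. -/

import Mathlib

open Matrix ComplexOrder

/-- The matrix of the orthogonal projection of `ℂ^m` onto the subspace `U`. -/
noncomputable def projMat {m : ℕ} (U : Submodule ℂ (EuclideanSpace ℂ (Fin m))) :
    Matrix (Fin m) (Fin m) ℂ :=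
  Matrix.toEuclideanLin.symm (U.subtype ∘ₗ (U.orthogonalProjectionOnto).toLinearMap)

/-- `E_A`: orthogonal projection onto the orthogonal complement of the column space of `A`. -/
noncomputable def eProj {m p : ℕ} (A : Matrix (Fin m) (Fin p) ℂ) : Matrix (Fin m) (Fin m) ℂ :=
  projMat (LinearMap.range (Matrix.toEuclideanLin A))ᗮ

/-- `F_B`: orthogonal projection onto the kernel of `B`. -/
noncomputable def fProj {q m : ℕ} (B : Matrix (Fin q) (Fin m) ℂ) : Matrix (Fin m) (Fin m) ℂ :=
  projMat (LinearMap.ker (Matrix.toEuclideanLin B))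

/-- `i₊`: the number of positive eigenvalues of a Hermitian matrix, with multiplicity. -/
noncomputable def iPos {ι : Type} [Fintype ι] [DecidableEq ι] (A : Matrix ι ι ℂ) : ℕ :=
  if h : A.IsHermitian then Nat.card {i : ι // 0 < h.eigenvalues i} else 0

/-- `i₋`: the number of negative eigenvalues of a Hermitian matrix, with multiplicity. -/
noncomputable def iNeg {ι : Type} [Fintype ι] [DecidableEq ι] (A : Matrix ι ι ℂ) : ℕ :=
  if h : A.IsHermitian then Nat.card {i : ι // h.eigenvalues i < 0} else 0

open scoped InnerProductSpace

section Spectral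

variable {ι : Type} [Fintype ι] [DecidableEq ι] {A : Matrix ι ι ℂ}

lemma repr_toEuclideanLin (hA : A.IsHermitian) (x : EuclideanSpace ℂ ι) (i : ι) :
    hA.eigenvectorBasis.repr (Matrix.toEuclideanLin A x) i
      = (hA.eigenvalues i : ℂ) * hA.eigenvectorBasis.repr x i := by
  rw [hA.eigenvectorBasis.repr_apply_apply, hA.eigenvectorBasis.repr_apply_apply,
    ← (Matrix.isHermitian_iff_isSymmetric.1 hA) (hA.eigenvectorBasis i) x]
  have h1 : Matrix.toEuclideanLin A (hA.eigenvectorBasis i)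
      = (hA.eigenvalues i : ℂ) • hA.eigenvectorBasis i := by
    rw [Matrix.toEuclideanLin_apply]
    apply (WithLp.equiv 2 _).injective
    simpa using hA.mulVec_eigenvectorBasis i
  rw [h1, inner_smul_left]
  simp [mul_comm]

lemma qf_eq_sum (hA : A.IsHermitian) (x : EuclideanSpace ℂ ι) :
    star (WithLp.equiv 2 _ x) ⬝ᵥ (A *ᵥ WithLp.equiv 2 _ x)
      = ((∑ i, hA.eigenvalues i * ‖hA.eigenvectorBasis.repr x i‖ ^ 2 : ℝ) : ℂ) := by
  have h0 : star (WithLp.equiv 2 _ x) ⬝ᵥ (A *ᵥ WithLp.equiv 2 _ x)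
      = ⟪x, Matrix.toEuclideanLin A x⟫_ℂ := by
    rw [EuclideanSpace.inner_eq_star_dotProduct, dotProduct_comm]; rfl
  rw [h0, ← hA.eigenvectorBasis.repr.inner_map_map x (Matrix.toEuclideanLin A x)]
  rw [PiLp.inner_apply]
  push_cast
  refine Finset.sum_congr rfl fun i _ => ?_
  rw [repr_toEuclideanLin hA x i]
  simp only [RCLike.inner_apply, starRingEnd_apply]
  rw [show (hA.eigenvalues i : ℂ) * hA.eigenvectorBasis.repr x i *
      star (hA.eigenvectorBasis.repr x i) = (hA.eigenvalues i : ℂ) *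
      (star (hA.eigenvectorBasis.repr x i) * hA.eigenvectorBasis.repr x i) by ring]
  congr 1
  rw [mul_comm]; exact Complex.mul_conj' _


lemma repr_eq_zero_of_mem_span (hA : A.IsHermitian) {s : Set ι} {x : EuclideanSpace ℂ ι}
    (hx : x ∈ Submodule.span ℂ (hA.eigenvectorBasis '' s)) {i : ι} (hi : i ∉ s) :
    hA.eigenvectorBasis.repr x i = 0 := by
  classical
  rw [← hA.eigenvectorBasis.coe_toBasis] at hx
  rw [← hA.eigenvectorBasis.coe_toBasis_repr_apply]
  have := (Module.Basis.mem_span_image hA.eigenvectorBasis.toBasis).1 hx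
  by_contra h
  exact hi (this (Finsupp.mem_support_iff.2 h))

lemma finrank_span_eig (hA : A.IsHermitian) (s : Set ι) [DecidablePred (· ∈ s)] :
    Module.finrank ℂ (Submodule.span ℂ (hA.eigenvectorBasis '' s)) = Fintype.card s := by
  classical
  have h1 : hA.eigenvectorBasis '' s = Set.range (fun i : s => hA.eigenvectorBasis i) := by
    ext y; simp
  rw [h1, finrank_span_eq_card]
  exact (hA.eigenvectorBasis.orthonormal.comp _ Subtype.val_injective).linearIndependent

lemma qf_neg_on_negSpan (hA : A.IsHermitian) {x : EuclideanSpace ℂ ι}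
    (hx : x ∈ Submodule.span ℂ (hA.eigenvectorBasis '' {i | hA.eigenvalues i < 0}))
    (hx0 : x ≠ 0) :
    star (WithLp.equiv 2 _ x) ⬝ᵥ (A *ᵥ WithLp.equiv 2 _ x) < 0 := by
  rw [qf_eq_sum hA x]
  have : (∑ i, hA.eigenvalues i * ‖hA.eigenvectorBasis.repr x i‖ ^ 2 : ℝ) < 0 := by
    obtain ⟨j, hj⟩ : ∃ j, hA.eigenvectorBasis.repr x j ≠ 0 := by
      by_contra h
      push_neg at h
      exact hx0 (by simpa using hA.eigenvectorBasis.repr.map_eq_zero_iff.1 (by ext i; simpa using h i))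
    have hjs : hA.eigenvalues j < 0 := by
      by_contra h
      exact hj (repr_eq_zero_of_mem_span hA hx h)
    have : ∀ i ∈ Finset.univ, hA.eigenvalues i * ‖hA.eigenvectorBasis.repr x i‖ ^ 2 ≤ 0 := by
      intro i _
      by_cases his : hA.eigenvalues i < 0
      · exact mul_nonpos_of_nonpos_of_nonneg his.le (by positivity)
      · rw [repr_eq_zero_of_mem_span hA hx his]; simp
    have hlt := Finset.sum_lt_sum (g := fun _ : ι => (0:ℝ)) this
      ⟨j, Finset.mem_univ j,
        mul_neg_of_neg_of_pos hjs (pow_pos (norm_pos_iff.2 hj) 2)⟩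
    simpa using hlt
  exact_mod_cast this

lemma qf_nonneg_on_posSpan (hA : A.IsHermitian) {x : EuclideanSpace ℂ ι}
    (hx : x ∈ Submodule.span ℂ (hA.eigenvectorBasis '' {i | ¬ hA.eigenvalues i < 0})) :
    0 ≤ star (WithLp.equiv 2 _ x) ⬝ᵥ (A *ᵥ WithLp.equiv 2 _ x) := by
  rw [qf_eq_sum hA x]
  have : (0:ℝ) ≤ ∑ i, hA.eigenvalues i * ‖hA.eigenvectorBasis.repr x i‖ ^ 2 := by
    refine Finset.sum_nonneg fun i _ => ?_
    by_cases his : hA.eigenvalues i < 0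
    · rw [repr_eq_zero_of_mem_span hA hx (by simpa using his)]; simp
    · exact mul_nonneg (not_lt.1 his) (by positivity)
  exact_mod_cast this

lemma iNeg_eq_card (hA : A.IsHermitian) :
    iNeg A = Fintype.card {i | hA.eigenvalues i < 0} := by
  rw [iNeg, dif_pos hA, Nat.card_eq_fintype_card]
  rfl

lemma finrank_le_iNeg (hA : A.IsHermitian) (V : Submodule ℂ (EuclideanSpace ℂ ι))
    (hV : ∀ x ∈ V, x ≠ 0 → star (WithLp.equiv 2 _ x) ⬝ᵥ (A *ᵥ WithLp.equiv 2 _ x) < 0) :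
    Module.finrank ℂ V ≤ iNeg A := by
  classical
  have hdisj : Disjoint V (Submodule.span ℂ (hA.eigenvectorBasis '' {i | ¬ hA.eigenvalues i < 0})) := by
    rw [Submodule.disjoint_def]
    intro x hxV hxW
    by_contra h
    exact absurd (qf_nonneg_on_posSpan hA hxW) (not_le_of_gt (hV x hxV h))
  have hle := Submodule.finrank_add_finrank_le_of_disjoint hdisj
  rw [finrank_span_eig hA _, finrank_euclideanSpace] at hle
  have hcompl : Fintype.card {i | ¬ hA.eigenvalues i < 0}
      = Fintype.card ι - Fintype.card {i | hA.eigenvalues i < 0} := by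
    convert Fintype.card_subtype_compl (fun i => hA.eigenvalues i < 0)
    exact Iff.rfl
  have hcard : Fintype.card {i | hA.eigenvalues i < 0} ≤ Fintype.card ι :=
    Fintype.card_subtype_le _
  rw [iNeg_eq_card hA]
  omega

lemma iNeg_add_finrank_le (hA : A.IsHermitian) (V : Submodule ℂ (EuclideanSpace ℂ ι))
    (hV : ∀ x ∈ V, 0 ≤ star (WithLp.equiv 2 _ x) ⬝ᵥ (A *ᵥ WithLp.equiv 2 _ x)) :
    iNeg A + Module.finrank ℂ V ≤ Fintype.card ι := by
  classical
  have hdisj : Disjoint (Submodule.span ℂ (hA.eigenvectorBasis '' {i | hA.eigenvalues i < 0})) V := by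
    rw [Submodule.disjoint_def]
    intro x hxW hxV
    by_contra h
    exact absurd (hV x hxV) (not_le_of_gt (qf_neg_on_negSpan hA hxW h))
  have hle := Submodule.finrank_add_finrank_le_of_disjoint hdisj
  rw [finrank_span_eig hA _, finrank_euclideanSpace] at hle
  rw [iNeg_eq_card hA]
  exact hle

end Spectral

section Proj

lemma Matrix.ext_mulVec {a b : Type} [Fintype b] [DecidableEq b] [Finite a]
    {M N : Matrix a b ℂ} (h : ∀ v, M *ᵥ v = N *ᵥ v) : M = N := by
  ext i j
  have := congrFun (h (Pi.single j 1)) i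
  simpa [Matrix.mulVec_single] using this

variable {m' p : ℕ}

lemma projMat_mulVec (U : Submodule ℂ (EuclideanSpace ℂ (Fin m'))) (v : Fin m' → ℂ) :
    projMat U *ᵥ v
      = WithLp.equiv 2 _
          ((U.orthogonalProjectionOnto ((WithLp.equiv 2 _).symm v) : EuclideanSpace ℂ (Fin m'))) := by
  calc projMat U *ᵥ v
      = WithLp.equiv 2 _ (Matrix.toEuclideanLin (projMat U) ((WithLp.equiv 2 _).symm v)) := by
        rfl
    _ = _ := by rw [projMat, Matrix.toEuclideanLin.apply_symm_apply]; rfl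

lemma projMat_isHermitian (U : Submodule ℂ (EuclideanSpace ℂ (Fin m'))) :
    (projMat U).IsHermitian := by
  rw [Matrix.isHermitian_iff_isSymmetric, projMat, Matrix.toEuclideanLin.apply_symm_apply]
  exact U.starProjection_isSymmetric

lemma projMat_mul_self (U : Submodule ℂ (EuclideanSpace ℂ (Fin m'))) :
    projMat U * projMat U = projMat U := by
  apply Matrix.ext_mulVec
  intro v
  rw [← Matrix.mulVec_mulVec, projMat_mulVec, projMat_mulVec,
    Equiv.symm_apply_apply, Submodule.orthogonalProjectionOnto_mem_subspace_eq_self]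

lemma eProj_isHermitian (A : Matrix (Fin m') (Fin p) ℂ) : (eProj A).IsHermitian :=
  projMat_isHermitian _

lemma eProj_mul_self (A : Matrix (Fin m') (Fin p) ℂ) : eProj A * eProj A = eProj A :=
  projMat_mul_self _

lemma eProj_mul_eq_zero (A : Matrix (Fin m') (Fin p) ℂ) : eProj A * A = 0 := by
  apply Matrix.ext_mulVec
  intro v
  rw [← Matrix.mulVec_mulVec, eProj, projMat_mulVec]
  have hmem : ((WithLp.equiv 2 (Fin m' → ℂ)).symm (A *ᵥ v))
      ∈ LinearMap.range (Matrix.toEuclideanLin A) :=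
    ⟨(WithLp.equiv 2 _).symm v, by rfl⟩
  rw [Submodule.orthogonalProjectionOnto_apply_of_mem_orthogonal (Submodule.le_orthogonal_orthogonal _ hmem)]
  simp [Matrix.zero_mulVec]

lemma sub_eProj_mem (A : Matrix (Fin m') (Fin p) ℂ) (v : Fin m' → ℂ) :
    (1 - eProj A) *ᵥ v ∈ LinearMap.range A.mulVecLin := by
  set U := LinearMap.range (Matrix.toEuclideanLin A)
  have hsum := Submodule.starProjection_add_starProjection_orthogonal (K := U)
    ((WithLp.equiv 2 (Fin m' → ℂ)).symm v)
  have h1 : (1 - eProj A) *ᵥ v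
      = WithLp.equiv 2 _ ((U.orthogonalProjectionOnto ((WithLp.equiv 2 _).symm v) :
          EuclideanSpace ℂ (Fin m'))) := by
    rw [Matrix.sub_mulVec, Matrix.one_mulVec, eProj, projMat_mulVec]
    have hv : WithLp.equiv 2 (Fin m' → ℂ)
          ((U.orthogonalProjectionOnto ((WithLp.equiv 2 _).symm v) : EuclideanSpace ℂ (Fin m')))
        + WithLp.equiv 2 (Fin m' → ℂ)
          ((Uᗮ.orthogonalProjectionOnto ((WithLp.equiv 2 _).symm v) : EuclideanSpace ℂ (Fin m')))
        = v := by
      exact (congrArg (WithLp.equiv 2 (Fin m' → ℂ)) hsum).trans (Equiv.apply_symm_apply _ _)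
    exact (eq_sub_of_add_eq hv).symm
  obtain ⟨y, hy⟩ := (U.orthogonalProjectionOnto ((WithLp.equiv 2 (Fin m' → ℂ)).symm v)).2
  refine ⟨WithLp.equiv 2 _ y, ?_⟩
  rw [Matrix.mulVecLin_apply, h1, ← hy]
  rw [show A *ᵥ (WithLp.equiv 2 (Fin p → ℂ)) y
      = WithLp.equiv 2 _ (Matrix.toEuclideanLin A y) by
    rfl]

end Proj

section Maps

variable {m n : ℕ}

lemma star_sum_elim {a b : Type} (u : a → ℂ) (v : b → ℂ) :
    star (Sum.elim u v) = Sum.elim (star u) (star v) := by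
  funext i; cases i <;> rfl

lemma qf_fromBlocks (B : Matrix (Fin m) (Fin m) ℂ) (A : Matrix (Fin m) (Fin n) ℂ)
    (u : Fin m → ℂ) (v : Fin n → ℂ) :
    star (Sum.elim u v) ⬝ᵥ ((Matrix.fromBlocks B A Aᴴ 0) *ᵥ Sum.elim u v)
      = star u ⬝ᵥ (B *ᵥ u) + star u ⬝ᵥ (A *ᵥ v) + star v ⬝ᵥ (Aᴴ *ᵥ u) := by
  rw [Matrix.fromBlocks_mulVec, star_sum_elim, sumElim_dotProduct_sumElim]
  simp [Matrix.zero_mulVec, dotProduct_add]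

/-- graph subspace map `u ↦ (u, -Xu)` -/
noncomputable def graphL (X : Matrix (Fin n) (Fin m) ℂ) :
    EuclideanSpace ℂ (Fin m) →ₗ[ℂ] EuclideanSpace ℂ (Fin m ⊕ Fin n) where
  toFun u := (WithLp.equiv 2 _).symm
    (Sum.elim (WithLp.equiv 2 _ u) (-(X *ᵥ (WithLp.equiv 2 _ u))))
  map_add' u v := by
    apply (WithLp.equiv 2 _).injective
    simp only [Equiv.apply_symm_apply, WithLp.equiv_apply, WithLp.equiv_symm_apply, WithLp.ofLp_toLp, WithLp.ofLp_add, Matrix.mulVec_add]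
    funext i; cases i <;> simp [add_comm]
  map_smul' c u := by
    apply (WithLp.equiv 2 _).injective
    simp only [Equiv.apply_symm_apply, WithLp.equiv_apply, WithLp.equiv_symm_apply, WithLp.ofLp_toLp, WithLp.ofLp_smul, Matrix.mulVec_smul,
      RingHom.id_apply]
    funext i; cases i <;> simp

/-- zero-padding map `y ↦ (0, y)` -/
noncomputable def zeroPadL (m n : ℕ) :
    EuclideanSpace ℂ (Fin n) →ₗ[ℂ] EuclideanSpace ℂ (Fin m ⊕ Fin n) where
  toFun y := (WithLp.equiv 2 _).symm (Sum.elim 0 (WithLp.equiv 2 _ y))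
  map_add' u v := by
    apply (WithLp.equiv 2 _).injective
    simp only [Equiv.apply_symm_apply, WithLp.equiv_apply, WithLp.equiv_symm_apply, WithLp.ofLp_toLp, WithLp.ofLp_add]
    funext i; cases i <;> simp
  map_smul' c u := by
    apply (WithLp.equiv 2 _).injective
    simp only [Equiv.apply_symm_apply, WithLp.equiv_apply, WithLp.equiv_symm_apply, WithLp.ofLp_toLp, WithLp.ofLp_smul, RingHom.id_apply]
    funext i; cases i <;> simp

/-- map `(α, y) ↦ (α • v, y)` -/
noncomputable def spanPadL (v : Fin m → ℂ) (n : ℕ) :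
    (ℂ × EuclideanSpace ℂ (Fin n)) →ₗ[ℂ] EuclideanSpace ℂ (Fin m ⊕ Fin n) where
  toFun p := (WithLp.equiv 2 _).symm (Sum.elim (p.1 • v) (WithLp.equiv 2 _ p.2))
  map_add' u w := by
    apply (WithLp.equiv 2 _).injective
    simp only [Equiv.apply_symm_apply, WithLp.equiv_apply, WithLp.equiv_symm_apply, WithLp.ofLp_toLp, WithLp.ofLp_add, Prod.fst_add, Prod.snd_add]
    funext i; cases i <;> simp [add_smul]
  map_smul' c u := by
    apply (WithLp.equiv 2 _).injective
    simp only [Equiv.apply_symm_apply, WithLp.equiv_apply, WithLp.equiv_symm_apply, WithLp.ofLp_toLp, WithLp.ofLp_smul, RingHom.id_apply,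
      Prod.smul_fst, Prod.smul_snd]
    funext i; cases i <;> simp [smul_smul, mul_assoc]

lemma graph_qf (A : Matrix (Fin m) (Fin n) ℂ) (X : Matrix (Fin n) (Fin m) ℂ)
    (B : Matrix (Fin m) (Fin m) ℂ) (u : Fin m → ℂ) :
    star u ⬝ᵥ (B *ᵥ u) + star u ⬝ᵥ (A *ᵥ (-(X *ᵥ u))) + star (-(X *ᵥ u)) ⬝ᵥ (Aᴴ *ᵥ u)
      = - (star u ⬝ᵥ ((A * X + (A * X)ᴴ - B) *ᵥ u)) := by
  have h2 : star (X *ᵥ u) ⬝ᵥ (Aᴴ *ᵥ u) = star u ⬝ᵥ ((A * X)ᴴ *ᵥ u) := by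
    rw [Matrix.star_mulVec, Matrix.dotProduct_mulVec, Matrix.vecMul_vecMul,
      ← Matrix.conjTranspose_mul, ← Matrix.dotProduct_mulVec]
  rw [Matrix.mulVec_neg, Matrix.mulVec_mulVec, star_neg, neg_dotProduct,
    dotProduct_neg, h2, Matrix.sub_mulVec, Matrix.add_mulVec,
    dotProduct_sub, dotProduct_add]
  ring

end Maps

section Main

variable {m n : ℕ}

lemma nonneg_of_not_lt {z : ℂ} (h1 : star z = z) (h2 : ¬ z < 0) : 0 ≤ z := by
  have him : z.im = 0 := by
    have := congrArg Complex.im h1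
    simp only [Complex.star_def, Complex.conj_im] at this
    exact CharZero.neg_eq_self_iff.1 this
  rw [Complex.le_def]
  refine ⟨?_, by simp [him]⟩
  by_contra hre
  exact h2 (Complex.lt_def.2 ⟨by simpa using not_le.1 hre, by simp [him]⟩)

lemma fromBlocks_isHermitian (A : Matrix (Fin m) (Fin n) ℂ) (B : Matrix (Fin m) (Fin m) ℂ)
    (hB : B.IsHermitian) : (Matrix.fromBlocks B A Aᴴ 0).IsHermitian := by
  rw [Matrix.IsHermitian, Matrix.fromBlocks_conjTranspose]
  rw [hB.eq, Matrix.conjTranspose_conjTranspose, Matrix.conjTranspose_zero]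

lemma iNeg_fromBlocks_le (A : Matrix (Fin m) (Fin n) ℂ) (B : Matrix (Fin m) (Fin m) ℂ)
    (hB : B.IsHermitian) : iNeg (Matrix.fromBlocks B A Aᴴ 0) ≤ m := by
  have h := iNeg_add_finrank_le (fromBlocks_isHermitian A B hB)
    (LinearMap.range (zeroPadL m n)) ?_
  · have hinj : Function.Injective (zeroPadL m n) := by
      intro y z hyz
      have h2 : Sum.elim (0 : Fin m → ℂ) (WithLp.equiv 2 _ y)
          = Sum.elim (0 : Fin m → ℂ) (WithLp.equiv 2 _ z) := by
        simpa [zeroPadL] using congrArg (WithLp.equiv 2 _) hyz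
      apply (WithLp.equiv 2 (Fin n → ℂ)).injective
      funext j; exact congrFun h2 (Sum.inr j)
    rw [LinearMap.finrank_range_of_inj hinj, finrank_euclideanSpace] at h
    simp only [Fintype.card_sum, Fintype.card_fin] at h
    omega
  · rintro x ⟨y, rfl⟩
    rw [show WithLp.equiv 2 ((Fin m ⊕ Fin n) → ℂ) ((zeroPadL m n) y)
        = Sum.elim (0 : Fin m → ℂ) (WithLp.equiv 2 (Fin n → ℂ) y) from Equiv.apply_symm_apply _ _]
    rw [qf_fromBlocks]
    simp [Matrix.mulVec_zero]

lemma le_iNeg_fromBlocks (A : Matrix (Fin m) (Fin n) ℂ) (B : Matrix (Fin m) (Fin m) ℂ)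
    (hB : B.IsHermitian) (X : Matrix (Fin n) (Fin m) ℂ)
    (hX : (A * X + (A * X)ᴴ - B).PosDef) : m ≤ iNeg (Matrix.fromBlocks B A Aᴴ 0) := by
  have h := finrank_le_iNeg (fromBlocks_isHermitian A B hB)
    (LinearMap.range (graphL X)) ?_
  · have hinj : Function.Injective (graphL X) := by
      intro y z hyz
      have h2 : Sum.elim (WithLp.equiv 2 _ y) (-(X *ᵥ WithLp.equiv 2 _ y))
          = Sum.elim (WithLp.equiv 2 _ z) (-(X *ᵥ WithLp.equiv 2 _ z)) := by
        simpa [graphL] using congrArg (WithLp.equiv 2 _) hyz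
      apply (WithLp.equiv 2 (Fin m → ℂ)).injective
      funext j; exact congrFun h2 (Sum.inl j)
    rwa [LinearMap.finrank_range_of_inj hinj, finrank_euclideanSpace, Fintype.card_fin] at h
  · rintro x ⟨u, rfl⟩ hx0
    rw [show WithLp.equiv 2 ((Fin m ⊕ Fin n) → ℂ) ((graphL X) u)
        = Sum.elim (WithLp.equiv 2 (Fin m → ℂ) u) (-(X *ᵥ WithLp.equiv 2 (Fin m → ℂ) u)) from
        Equiv.apply_symm_apply _ _]
    rw [qf_fromBlocks, graph_qf]
    have hu0 : WithLp.equiv 2 _ u ≠ 0 := by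
      intro h0
      apply hx0
      have hu : u = 0 := by
        apply (WithLp.equiv 2 (Fin m → ℂ)).injective
        simpa using h0
      rw [hu, map_zero]
    exact neg_lt_zero.2 (hX.dotProduct_mulVec_pos hu0)

lemma claim_of_iNeg (A : Matrix (Fin m) (Fin n) ℂ) (B : Matrix (Fin m) (Fin m) ℂ)
    (hB : B.IsHermitian) (hiN : iNeg (Matrix.fromBlocks B A Aᴴ 0) = m) :
    ∀ v : Fin m → ℂ, eProj A *ᵥ v = v → v ≠ 0 → star v ⬝ᵥ (B *ᵥ v) < 0 := by
  intro v hEv hv0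
  by_contra hcon
  have hAEv : Aᴴ *ᵥ v = 0 := by
    have h0 : Aᴴ * eProj A = 0 := by
      have := congrArg Matrix.conjTranspose (eProj_mul_eq_zero A)
      simpa [Matrix.conjTranspose_mul, (eProj_isHermitian A).eq] using this
    calc Aᴴ *ᵥ v = Aᴴ *ᵥ (eProj A *ᵥ v) := by rw [hEv]
      _ = (Aᴴ * eProj A) *ᵥ v := by rw [Matrix.mulVec_mulVec]
      _ = 0 := by rw [h0, Matrix.zero_mulVec]
  have hstarA : star v ᵥ* A = 0 := by
    have := congrArg star hAEv
    rwa [Matrix.star_mulVec, Matrix.conjTranspose_conjTranspose, star_zero] at this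
  have hreal : star (star v ⬝ᵥ (B *ᵥ v)) = star v ⬝ᵥ (B *ᵥ v) := by
    conv_lhs => rw [Matrix.star_dotProduct]
    rw [star_star, Matrix.star_mulVec, ← Matrix.dotProduct_mulVec, hB.eq]
  have hge : 0 ≤ star v ⬝ᵥ (B *ᵥ v) := nonneg_of_not_lt hreal hcon
  have h := iNeg_add_finrank_le (fromBlocks_isHermitian A B hB)
    (LinearMap.range (spanPadL v n)) ?_
  · have hinj : Function.Injective (spanPadL v n) := by
      intro p q hpq
      have h2 : Sum.elim (p.1 • v) (WithLp.equiv 2 _ p.2)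
          = Sum.elim (q.1 • v) (WithLp.equiv 2 _ q.2) := by
        simpa [spanPadL] using congrArg (WithLp.equiv 2 _) hpq
      have h3 : p.1 • v = q.1 • v := by funext i; exact congrFun h2 (Sum.inl i)
      have h4 : p.1 = q.1 := by
        by_contra hne
        have := sub_eq_zero.2 h3
        rw [← sub_smul] at this
        exact hv0 ((smul_eq_zero.1 this).resolve_left (sub_ne_zero.2 hne))
      refine Prod.ext h4 ?_
      apply (WithLp.equiv 2 (Fin n → ℂ)).injective
      funext j; exact congrFun h2 (Sum.inr j)
    rw [LinearMap.finrank_range_of_inj hinj] at h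
    rw [Module.finrank_prod, Module.finrank_self, finrank_euclideanSpace] at h
    simp only [Fintype.card_sum, Fintype.card_fin, Fintype.card_fin] at h
    omega
  · rintro x ⟨⟨α, y⟩, rfl⟩
    rw [show WithLp.equiv 2 ((Fin m ⊕ Fin n) → ℂ) ((spanPadL v n) (α, y))
        = Sum.elim (α • v) (WithLp.equiv 2 (Fin n → ℂ) y) from Equiv.apply_symm_apply _ _]
    rw [qf_fromBlocks]
    have t3 : star (WithLp.equiv 2 _ y) ⬝ᵥ (Aᴴ *ᵥ (α • v)) = 0 := by
      rw [Matrix.mulVec_smul, hAEv, smul_zero, dotProduct_zero]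
    have t2 : star (α • v) ⬝ᵥ (A *ᵥ (WithLp.equiv 2 _ y)) = 0 := by
      rw [star_smul, smul_dotProduct, Matrix.dotProduct_mulVec, hstarA,
        zero_dotProduct, smul_zero]
    have t1 : star (α • v) ⬝ᵥ (B *ᵥ (α • v)) = (star α * α) * (star v ⬝ᵥ (B *ᵥ v)) := by
      rw [star_smul, smul_dotProduct, Matrix.mulVec_smul, dotProduct_smul]
      simp only [smul_eq_mul]
      ring
    rw [t1, t2, t3, add_zero, add_zero]
    exact mul_nonneg (star_mul_self_nonneg α) hge

end Main

section Main2

variable {m n : ℕ}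

lemma part2_of_claim (A : Matrix (Fin m) (Fin n) ℂ) (B : Matrix (Fin m) (Fin m) ℂ)
    (hB : B.IsHermitian)
    (hcl : ∀ v : Fin m → ℂ, eProj A *ᵥ v = v → v ≠ 0 → star v ⬝ᵥ (B *ᵥ v) < 0) :
    (-(eProj A * B * eProj A)).PosSemidef ∧
      LinearMap.range (eProj A * B * eProj A).mulVecLin
        = LinearMap.range (eProj A).mulVecLin := by
  set E := eProj A with hE
  have hEH := eProj_isHermitian A
  have hE2 := eProj_mul_self A
  have hEBEH : (E * B * E).IsHermitian := by
    rw [Matrix.IsHermitian]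
    simp [Matrix.conjTranspose_mul, hB.eq, hEH.eq, Matrix.mul_assoc, hE]
  have hqf : ∀ x : Fin m → ℂ, star x ⬝ᵥ ((E * B * E) *ᵥ x)
      = star (E *ᵥ x) ⬝ᵥ (B *ᵥ (E *ᵥ x)) := by
    intro x
    rw [← Matrix.mulVec_mulVec, ← Matrix.mulVec_mulVec, Matrix.dotProduct_mulVec]
    congr 1
    conv_rhs => rw [Matrix.star_mulVec, hEH.eq]
  have hEfix : ∀ x : Fin m → ℂ, E *ᵥ (E *ᵥ x) = E *ᵥ x := by
    intro x; rw [Matrix.mulVec_mulVec, hE2]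
  have hpsd : (-(E * B * E)).PosSemidef := by
    refine Matrix.PosSemidef.of_dotProduct_mulVec_nonneg hEBEH.neg fun x => ?_
    rw [Matrix.neg_mulVec, dotProduct_neg]
    rcases eq_or_ne (E *ᵥ x) 0 with h0 | h0
    · rw [hqf, h0]; simp
    · exact neg_nonneg.2 (le_of_lt (by rw [hqf]; exact hcl (E *ᵥ x) (hEfix x) h0))
  refine ⟨hpsd, ?_⟩
  have hsub : LinearMap.range (E * B * E).mulVecLin ≤ LinearMap.range E.mulVecLin := by
    rintro _ ⟨x, rfl⟩
    exact ⟨(B * E) *ᵥ x, by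
      rw [Matrix.mulVecLin_apply, Matrix.mulVecLin_apply, Matrix.mulVec_mulVec,
        Matrix.mul_assoc]⟩
  have hker : ∀ z, z ∈ LinearMap.range E.mulVecLin → (E * B * E) *ᵥ z = 0 → z = 0 := by
    rintro _ ⟨w, rfl⟩ hz
    by_contra hz0
    have hEz : E *ᵥ (E.mulVecLin w) = E.mulVecLin w := hEfix w
    have hlt := hcl (E.mulVecLin w) hEz hz0
    have hzero : star (E.mulVecLin w) ⬝ᵥ (B *ᵥ (E.mulVecLin w)) = 0 := by
      have h1 := hqf (E.mulVecLin w)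
      rw [hEz] at h1
      rw [← h1, hz, dotProduct_zero]
    rw [hzero] at hlt
    exact lt_irrefl 0 hlt
  set φ : LinearMap.range E.mulVecLin →ₗ[ℂ] (Fin m → ℂ) :=
    (E * B * E).mulVecLin ∘ₗ (LinearMap.range E.mulVecLin).subtype with hφ
  have hφinj : Function.Injective φ := by
    rw [← LinearMap.ker_eq_bot]
    apply LinearMap.ker_eq_bot'.2
    intro z hz
    exact Subtype.ext (hker z z.2 hz)
  have h1 : Module.finrank ℂ (LinearMap.range φ)
      = Module.finrank ℂ (LinearMap.range E.mulVecLin) :=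
    LinearMap.finrank_range_of_inj hφinj
  have h2 : LinearMap.range φ ≤ LinearMap.range (E * B * E).mulVecLin := by
    rintro _ ⟨z, rfl⟩; exact ⟨z, rfl⟩
  have h3 : Module.finrank ℂ (LinearMap.range E.mulVecLin)
      ≤ Module.finrank ℂ (LinearMap.range (E * B * E).mulVecLin) := by
    rw [← h1]; exact Submodule.finrank_mono h2
  exact Submodule.eq_of_le_of_finrank_le hsub h3

end Main2

section Main3

variable {m n : ℕ}

lemma exists_X_of_part2 (A : Matrix (Fin m) (Fin n) ℂ) (B : Matrix (Fin m) (Fin m) ℂ)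
    (hB : B.IsHermitian)
    (hpsd : (-(eProj A * B * eProj A)).PosSemidef)
    (hrange : LinearMap.range (eProj A * B * eProj A).mulVecLin
        = LinearMap.range (eProj A).mulVecLin) :
    ∃ X : Matrix (Fin n) (Fin m) ℂ, (A * X + (A * X)ᴴ - B).PosDef := by
  classical
  set E := eProj A with hEdef
  have hEH := eProj_isHermitian A
  have hE2 := eProj_mul_self A
  have hEBEH : (E * B * E).IsHermitian := by
    rw [Matrix.IsHermitian]
    simp [Matrix.conjTranspose_mul, hB.eq, hEH.eq, Matrix.mul_assoc, hEdef]
  set P : Matrix (Fin m) (Fin m) ℂ := 1 - E with hPdef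
  have hPH : Pᴴ = P := by
    rw [hPdef, Matrix.conjTranspose_sub, Matrix.conjTranspose_one, hEH.eq]
  have hP2 : P * P = P := by
    rw [hPdef, Matrix.mul_sub, Matrix.mul_one, Matrix.sub_mul, Matrix.one_mul, hE2]
    simp [hEdef]
  set C : Matrix (Fin m) (Fin m) ℂ := P * (1 + B * E + (2⁻¹ : ℂ) • (B * P)) with hCdef
  have hXex : ∀ j : Fin m, ∃ x : Fin n → ℂ, A *ᵥ x = C *ᵥ Pi.single j 1 := by
    intro j
    obtain ⟨x, hx⟩ := sub_eProj_mem A ((1 + B * E + (2⁻¹ : ℂ) • (B * P)) *ᵥ Pi.single j 1)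
    refine ⟨x, ?_⟩
    rw [Matrix.mulVecLin_apply] at hx
    rw [hx, hCdef, ← Matrix.mulVec_mulVec]
  choose xc hxc using hXex
  refine ⟨Matrix.of (fun i j => xc j i), ?_⟩
  have hAX : A * Matrix.of (fun i j => xc j i) = C := by
    ext i j
    have h5 := congrFun (hxc j) i
    rw [Matrix.mulVec_single] at h5
    simpa [Matrix.mul_apply, Matrix.mulVec, dotProduct] using h5
  have hCexp : C = P + P * B * E + (2⁻¹ : ℂ) • (P * B * P) := by
    rw [hCdef, Matrix.mul_add, Matrix.mul_add, Matrix.mul_one, Matrix.mul_smul,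
      ← Matrix.mul_assoc, ← Matrix.mul_assoc]
  have hstar2 : star (2⁻¹ : ℂ) = 2⁻¹ := by
    rw [Complex.star_def, map_inv₀, Complex.conj_ofNat]
  have hPBPH : (P * B * P)ᴴ = P * B * P := by
    rw [Matrix.conjTranspose_mul, Matrix.conjTranspose_mul, hPH, hB.eq, Matrix.mul_assoc]
  have hCH : Cᴴ = P + E * B * P + (2⁻¹ : ℂ) • (P * B * P) := by
    rw [hCexp, Matrix.conjTranspose_add, Matrix.conjTranspose_add, Matrix.conjTranspose_smul,
      hPBPH, hstar2, hPH, Matrix.conjTranspose_mul, Matrix.conjTranspose_mul, hPH, hB.eq,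
      hEH.eq, Matrix.mul_assoc]
    rw [← hEdef, Matrix.mul_assoc]
  have hBdec : B = P * B * P + P * B * E + (E * B * P + E * B * E) := by
    have hPE : P + E = 1 := by rw [hPdef, sub_add_cancel]
    calc B = (P + E) * B * (P + E) := by rw [hPE, Matrix.one_mul, Matrix.mul_one]
      _ = _ := by noncomm_ring
  have hhalf : (2⁻¹ : ℂ) • (P * B * P) + (2⁻¹ : ℂ) • (P * B * P) = P * B * P := by
    rw [← add_smul]
    norm_num
  have hD : A * Matrix.of (fun i j => xc j i) + (A * Matrix.of (fun i j => xc j i))ᴴ - B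
      = P + P - E * B * E := by
    rw [hAX, hCH, hCexp]
    have step1 : (P + P * B * E + (2⁻¹:ℂ) • (P * B * P))
          + (P + E * B * P + (2⁻¹:ℂ) • (P * B * P)) - B
        = (P + P) + ((2⁻¹:ℂ) • (P * B * P) + (2⁻¹:ℂ) • (P * B * P))
          + (P * B * E + E * B * P) - B := by abel
    rw [step1, hhalf, sub_eq_sub_iff_add_eq_add]
    conv_rhs => rw [hBdec]
    abel
  rw [hD]
  refine Matrix.PosDef.of_dotProduct_mulVec_pos ?_ ?_
  · show (P + P - E * B * E)ᴴ = P + P - E * B * E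
    rw [Matrix.conjTranspose_sub, Matrix.conjTranspose_add, hPH, hEBEH.eq]
  · intro x hx
    have hPquad : star x ⬝ᵥ (P *ᵥ x) = star (P *ᵥ x) ⬝ᵥ (P *ᵥ x) := by
      conv_lhs => rw [← hP2, ← Matrix.mulVec_mulVec, Matrix.dotProduct_mulVec]
      congr 1
      conv_rhs => rw [Matrix.star_mulVec, hPH]
    have hQ := hpsd.dotProduct_mulVec_nonneg x
    rw [Matrix.neg_mulVec, dotProduct_neg] at hQ
    rw [Matrix.sub_mulVec, Matrix.add_mulVec, dotProduct_sub, dotProduct_add]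
    rcases eq_or_ne (P *ᵥ x) 0 with hP0 | hP0
    · have hterm : star x ⬝ᵥ (P *ᵥ x) = 0 := by
        rw [hPquad, hP0, dotProduct_zero]
      have hEx : E *ᵥ x = x := by
        have hsub2 : P *ᵥ x = x - E *ᵥ x := by
          rw [hPdef, Matrix.sub_mulVec, Matrix.one_mulVec]
        rw [hsub2] at hP0
        exact (sub_eq_zero.1 hP0).symm
      have hne : star x ⬝ᵥ ((E * B * E) *ᵥ x) ≠ 0 := by
        intro h0
        have hEBEx : (E * B * E) *ᵥ x = 0 := by
          have h1 : star x ⬝ᵥ ((-(E * B * E)) *ᵥ x) = 0 := by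
            rw [Matrix.neg_mulVec, dotProduct_neg, h0, neg_zero]
          have h2 := (hpsd.dotProduct_mulVec_zero_iff x).1 h1
          rw [Matrix.neg_mulVec, neg_eq_zero] at h2
          exact h2
        have hxmem : x ∈ LinearMap.range (E * B * E).mulVecLin := by
          rw [hrange]
          exact ⟨x, by rw [Matrix.mulVecLin_apply, hEx]⟩
        obtain ⟨z, hz⟩ := hxmem
        have hx0 : star x ⬝ᵥ x = 0 := by
          have hsx : star x = star z ᵥ* (E * B * E) := by
            rw [← hz, Matrix.mulVecLin_apply, Matrix.star_mulVec, hEBEH.eq]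
          rw [hsx, ← Matrix.dotProduct_mulVec, hEBEx, dotProduct_zero]
        exact hx (dotProduct_star_self_eq_zero.1 hx0)
      have hpos : 0 < -(star x ⬝ᵥ ((E * B * E) *ᵥ x)) :=
        lt_of_le_of_ne hQ (Ne.symm (neg_ne_zero.2 hne))
      rw [hterm]
      simpa using hpos
    · have h1 : 0 < star x ⬝ᵥ (P *ᵥ x) := by
        rw [hPquad]
        exact dotProduct_star_self_pos_iff.2 hP0
      have := add_pos_of_pos_of_nonneg (add_pos h1 h1) hQ
      rw [← sub_eq_add_neg] at this
      exact this

end Main3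


theorem stmt13 {m n : ℕ} (A : Matrix (Fin m) (Fin n) ℂ)
    (B : Matrix (Fin m) (Fin m) ℂ) (hB : B.IsHermitian)
    (M : Matrix (Fin m ⊕ Fin n) (Fin m ⊕ Fin n) ℂ)
    (hM : M = Matrix.fromBlocks B A Aᴴ 0) :
    ((∃ X : Matrix (Fin n) (Fin m) ℂ, (A * X + (A * X)ᴴ - B).PosDef) ↔
        (-(eProj A * B * eProj A)).PosSemidef ∧
          LinearMap.range (eProj A * B * eProj A).mulVecLin
            = LinearMap.range (eProj A).mulVecLin) ∧
      ((∃ X : Matrix (Fin n) (Fin m) ℂ, (A * X + (A * X)ᴴ - B).PosDef) ↔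
        iNeg M = m) := by
  subst hM
  have key1 : (∃ X : Matrix (Fin n) (Fin m) ℂ, (A * X + (A * X)ᴴ - B).PosDef) →
      iNeg (Matrix.fromBlocks B A Aᴴ 0) = m := by
    rintro ⟨X, hX⟩
    exact le_antisymm (iNeg_fromBlocks_le A B hB) (le_iNeg_fromBlocks A B hB X hX)
  have key2 : iNeg (Matrix.fromBlocks B A Aᴴ 0) = m →
      (-(eProj A * B * eProj A)).PosSemidef ∧
        LinearMap.range (eProj A * B * eProj A).mulVecLin
          = LinearMap.range (eProj A).mulVecLin :=
    fun h => part2_of_claim A B hB (claim_of_iNeg A B hB h)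
  have key3 : ((-(eProj A * B * eProj A)).PosSemidef ∧
      LinearMap.range (eProj A * B * eProj A).mulVecLin
        = LinearMap.range (eProj A).mulVecLin) →
      ∃ X : Matrix (Fin n) (Fin m) ℂ, (A * X + (A * X)ᴴ - B).PosDef :=
    fun h => exists_X_of_part2 A B hB h.1 h.2
  exact ⟨⟨fun h => key2 (key1 h), key3⟩, ⟨key1, fun h => key3 (key2 h)⟩⟩
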